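/- Let h1, g1, h2, g2 be analytic on the unit disk with h1 - g1 = z and h2 - g2 = z. If Re (h1*h2)'(z) > 1/2 for all z in the unit disk, then |(g1*g2)'(z)| < |(h1*h2)'(z)| for all z in the unit disk; i.e., the harmonic convolution f1*f2 is sense-preserving. -/

import Mathlib

open FormalMultilinearSeries Filter
open scoped ENNReal NNReal

lemma coeff_zero_of_tsum_zero (c : ℕ → ℂ)
    (hs : ∀ z : ℂ, ‖z‖ < 1 → Summable fun n => c n * z ^ n)
    (h0 : ∀ z : ℂ, ‖z‖ < 1 → (∑' n : ℕ, c n * z ^ n) = 0) :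
    ∀ n, c n = 0 := by
  set p := FormalMultilinearSeries.ofScalars ℂ c with hp
  have hnorm34 : ‖(3/4 : ℂ)‖ = (3/4 : ℝ) := by
    rw [show (3/4 : ℂ) = ((3/4 : ℝ) : ℂ) by norm_num, Complex.norm_real]; norm_num
  have hrad : (((1/2 : ℝ≥0)) : ℝ≥0∞) ≤ p.radius := by
    have hsum : Summable fun n => c n * (3/4 : ℂ) ^ n := hs _ (by rw [hnorm34]; norm_num)
    have htend : Tendsto (fun n => ‖p n‖ * ((3/4 : ℝ≥0) : ℝ) ^ n) atTop (nhds 0) := by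
      have := hsum.tendsto_atTop_zero.norm
      simp only [norm_zero] at this
      convert this using 2 with n
      rw [norm_mul, norm_pow, hnorm34, hp, ofScalars_norm]
      norm_num
    exact le_trans (ENNReal.coe_le_coe.mpr (by rw [← NNReal.coe_le_coe]; push_cast; norm_num)) (p.le_radius_of_tendsto htend)
  have hball : HasFPowerSeriesOnBall (0 : ℂ → ℂ) p 0 (((1/2 : ℝ≥0)) : ℝ≥0∞) := by
    refine ⟨hrad, by norm_num, ?_⟩
    intro y hy
    rw [EMetric.mem_ball, edist_zero_right, enorm_eq_nnnorm, ← ENNReal.coe_lt_coe.symm] at hy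
    have hy1 : ‖y‖ < 1 := by
      have h2 : (‖y‖ : ℝ) < ((1/2:ℝ≥0):ℝ) := hy
      rw [NNReal.coe_div] at h2; push_cast at h2
      linarith
    have hgoal : HasSum (fun n => (FormalMultilinearSeries.ofScalars ℂ c n) fun _ => y)
        ((0 : ℂ → ℂ) (0 + y)) := by
      simp only [ofScalars_apply_eq, smul_eq_mul, Pi.zero_apply]
      exact h0 y hy1 ▸ (hs y hy1).hasSum
    exact hgoal
  have hp0 : p = 0 := hball.hasFPowerSeriesAt.eq_zero
  have hc : c = 0 := (ofScalars_series_eq_zero ℂ).mp hp0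
  exact fun n => congrFun hc n

lemma coeff_diff_eq (a b : ℕ → ℂ)
    (hsa : ∀ z : ℂ, ‖z‖ < 1 → Summable fun n => a n * z ^ n)
    (hsb : ∀ z : ℂ, ‖z‖ < 1 → Summable fun n => b n * z ^ n)
    (hdiff : ∀ z : ℂ, ‖z‖ < 1 →
      (∑' n : ℕ, a n * z ^ n) - (∑' n : ℕ, b n * z ^ n) = z) :
    ∀ n, a n - b n = if n = 1 then 1 else 0 := by
  have hind : ∀ z : ℂ, Summable fun n => (if n = 1 then (1:ℂ) else 0) * z ^ n := by
    intro z
    apply summable_of_ne_finset_zero (s := {1})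
    intro n hn
    simp only [Finset.mem_singleton] at hn
    rw [if_neg hn, zero_mul]
  have hindsum : ∀ z : ℂ, (∑' n : ℕ, (if n = 1 then (1:ℂ) else 0) * z ^ n) = z := by
    intro z
    rw [tsum_eq_single 1 (fun n hn => by rw [if_neg hn, zero_mul])]
    simp
  have key := coeff_zero_of_tsum_zero
    (fun n => a n - b n - (if n = 1 then 1 else 0)) ?_ ?_
  · intro n
    have := key n
    have h2 : a n - b n = if n = 1 then 1 else 0 := by
      have := sub_eq_zero.mp this; exact this
    exact h2
  · intro z hz
    have : (fun n => (a n - b n - (if n = 1 then (1:ℂ) else 0)) * z ^ n)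
        = fun n => a n * z ^ n - b n * z ^ n - (if n = 1 then (1:ℂ) else 0) * z ^ n := by
      funext n; ring
    rw [this]
    exact ((hsa z hz).sub (hsb z hz)).sub (hind z)
  · intro z hz
    have heq : (fun n => (a n - b n - (if n = 1 then (1:ℂ) else 0)) * z ^ n)
        = fun n => a n * z ^ n - b n * z ^ n - (if n = 1 then (1:ℂ) else 0) * z ^ n := by
      funext n; ring
    rw [heq, Summable.tsum_sub ((hsa z hz).sub (hsb z hz)) (hind z),
      Summable.tsum_sub (hsa z hz) (hsb z hz), hdiff z hz, hindsum z, sub_self]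

/-- If `h₁ - g₁ = z`, `h₂ - g₂ = z` and `Re (h₁*h₂)' > 1/2` on the unit disk, then
`|(g₁*g₂)'| < |(h₁*h₂)'|` on the unit disk: the harmonic convolution is sense-preserving. -/
theorem stmt2 (a1 b1 a2 b2 : ℕ → ℂ)
    (ha10 : a1 0 = 0) (ha11 : a1 1 = 1) (hb10 : b1 0 = 0) (hb11 : b1 1 = 0)
    (ha20 : a2 0 = 0) (ha21 : a2 1 = 1) (hb20 : b2 0 = 0) (hb21 : b2 1 = 0)
    (hs1 : ∀ z : ℂ, ‖z‖ < 1 → Summable fun n => a1 n * z ^ n)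
    (hs2 : ∀ z : ℂ, ‖z‖ < 1 → Summable fun n => b1 n * z ^ n)
    (hs3 : ∀ z : ℂ, ‖z‖ < 1 → Summable fun n => a2 n * z ^ n)
    (hs4 : ∀ z : ℂ, ‖z‖ < 1 → Summable fun n => b2 n * z ^ n)
    (hdiff1 : ∀ z : ℂ, ‖z‖ < 1 →
      (∑' n : ℕ, a1 n * z ^ n) - (∑' n : ℕ, b1 n * z ^ n) = z)
    (hdiff2 : ∀ z : ℂ, ‖z‖ < 1 →
      (∑' n : ℕ, a2 n * z ^ n) - (∑' n : ℕ, b2 n * z ^ n) = z)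
    (hre : ∀ z : ℂ, ‖z‖ < 1 →
      (1 : ℝ) / 2 < (∑' n : ℕ, ((n + 1 : ℕ) : ℂ) * (a1 (n + 1) * a2 (n + 1)) * z ^ n).re) :
    ∀ z : ℂ, ‖z‖ < 1 →
      ‖∑' n : ℕ, ((n + 1 : ℕ) : ℂ) * (b1 (n + 1) * b2 (n + 1)) * z ^ n‖
        < ‖∑' n : ℕ, ((n + 1 : ℕ) : ℂ) * (a1 (n + 1) * a2 (n + 1)) * z ^ n‖ := by
  have hc1 := coeff_diff_eq a1 b1 hs1 hs2 hdiff1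
  have hc2 := coeff_diff_eq a2 b2 hs3 hs4 hdiff2
  intro z hz
  set fA : ℕ → ℂ := fun n => ((n + 1 : ℕ) : ℂ) * (a1 (n + 1) * a2 (n + 1)) * z ^ n with hfA
  set fB : ℕ → ℂ := fun n => ((n + 1 : ℕ) : ℂ) * (b1 (n + 1) * b2 (n + 1)) * z ^ n with hfB
  set A : ℂ := ∑' n, fA n with hA
  have hAre : (1:ℝ)/2 < A.re := hre z hz
  have hAsum : Summable fA := by
    by_contra h
    rw [hA, tsum_eq_zero_of_not_summable h] at hAre
    simp at hAre
    linarith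
  have hBA : fB = fun n => fA n - (if n = 0 then 1 else 0) := by
    funext n
    match n with
    | 0 => simp [hfA, hfB, ha11, ha21, hb11, hb21]
    | Nat.succ m =>
      have h1 : a1 (m + 2) = b1 (m + 2) := by
        have := hc1 (m + 2)
        rw [if_neg (by omega)] at this
        exact sub_eq_zero.mp this
      have h2 : a2 (m + 2) = b2 (m + 2) := by
        have := hc2 (m + 2)
        rw [if_neg (by omega)] at this
        exact sub_eq_zero.mp this
      simp only [hfA, hfB, if_neg (Nat.succ_ne_zero m)]
      rw [show m + 1 + 1 = m + 2 from rfl, h1, h2, sub_zero]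
  have hindsum : Summable fun n : ℕ => (if n = 0 then (1:ℂ) else 0) := by
    apply summable_of_ne_finset_zero (s := {0})
    intro n hn
    simp only [Finset.mem_singleton] at hn
    rw [if_neg hn]
  have hBval : (∑' n, fB n) = A - 1 := by
    rw [hBA, Summable.tsum_sub hAsum hindsum, ← hA]
    congr 1
    rw [tsum_eq_single 0 (fun n hn => by rw [if_neg hn])]
    simp
  rw [hBval]
  have hsq : ‖A - 1‖ ^ 2 < ‖A‖ ^ 2 := by
    rw [show ‖A - 1‖^2 = Complex.normSq (A - 1) by
        rw [Complex.sq_norm],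
      show ‖A‖^2 = Complex.normSq A by rw [Complex.sq_norm]]
    simp only [Complex.normSq_apply, Complex.sub_re, Complex.sub_im, Complex.one_re,
      Complex.one_im]
    nlinarith
  nlinarith [norm_nonneg (A - 1), norm_nonneg A]
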